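/- Let A be a feasible tree solution and F a feasible solution with V[A]=V[F]. Let K = {e_1,…,e_l} ⊆ A with l ≥ 2 be a set of pairwise compatible edges all of which are safe. Then there is a path P in A that contains all edges of K. -/

import Mathlib

open Finset

attribute [local instance] Classical.propDecidable

variable {V : Type*} [Fintype V] [DecidableEq V]

/-- The simple graph on `V` induced by a finite set of (undirected) edges. -/
def graphOf (F : Finset (Sym2 V)) : SimpleGraph V where
  Adj u v := u ≠ v ∧ s(u, v) ∈ F
  symm := by
    constructor
    intro u v h
    refine ⟨Ne.symm h.1, ?_⟩
    rw [Sym2.eq_swap]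
    exact h.2
  loopless := by constructor; intro v h; exact h.1 rfl

/-- The set of vertices incident to at least one edge of `F` (denoted `V[F]` in the paper). -/
def supp (F : Finset (Sym2 V)) : Set V := {v | ∃ e ∈ F, v ∈ e}

/-- A Steiner forest `F` is feasible for the terminal pairs `T` if it connects every pair. -/
def Feasible (F : Finset (Sym2 V)) (T : Finset (V × V)) : Prop :=
  ∀ p ∈ T, (graphOf F).Reachable p.1 p.2

/-- Total edge cost `d(F)`. -/
def cost (d : Sym2 V → ℝ) (F : Finset (Sym2 V)) : ℝ := ∑ e ∈ F, d e

/-- `A` is a tree (on its vertex support): loopless edges, acyclic, connected on `V[A]`. -/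
def IsTreeSol (A : Finset (Sym2 V)) : Prop :=
  (∀ e ∈ A, ¬ e.IsDiag) ∧ (graphOf A).IsAcyclic ∧
    ∀ u ∈ supp A, ∀ v ∈ supp A, (graphOf A).Reachable u v

/-- Shortest-path distance between `u` and `v` in the graph with edge set `Eall`
and edge lengths `d`. -/
noncomputable def wdist (Eall : Finset (Sym2 V)) (d : Sym2 V → ℝ) (u v : V) : ℝ :=
  ⨅ p : (graphOf Eall).Walk u v, (p.edges.map d).sum

/-- Width of a vertex set `W`: the largest shortest-path distance of a terminal pair
whose two members both lie in `W`. -/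
noncomputable def widthSet (Eall : Finset (Sym2 V)) (d : Sym2 V → ℝ) (T : Finset (V × V))
    (W : Set V) : ℝ :=
  sSup {x : ℝ | ∃ p ∈ T, p.1 ∈ W ∧ p.2 ∈ W ∧ x = wdist Eall d p.1 p.2}

/-- Total width `w(F)`: the sum of the widths of the connected components of `F`. -/
noncomputable def totalWidth (Eall : Finset (Sym2 V)) (d : Sym2 V → ℝ) (T : Finset (V × V))
    (F : Finset (Sym2 V)) : ℝ :=
  ∑ᶠ c : (graphOf F).ConnectedComponent, widthSet Eall d T c.supp

/-- The potential `φ(F) = d(F) + w(F)`. -/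
noncomputable def phi (Eall : Finset (Sym2 V)) (d : Sym2 V → ℝ) (T : Finset (V × V))
    (F : Finset (Sym2 V)) : ℝ :=
  cost d F + totalWidth Eall d T F

/-- Some edge of `F` leaves the vertex set `W`. -/
def leavesSet (F : Finset (Sym2 V)) (W : Set V) : Prop :=
  ∃ g ∈ F, ∃ x y : V, g = s(x, y) ∧ x ∈ W ∧ y ∉ W

/-- `T_{e,f}`: the connected component of `A ∖ {e,f}` containing the interior of the
unique `e`–`f` path of the tree `A`; equivalently, the component containing an endpoint
of `e` together with an endpoint of `f`. -/
def midComp (A : Finset (Sym2 V)) (e f : Sym2 V) : Set V :=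
  {v | ∃ x ∈ e, ∃ y ∈ f,
    (graphOf (A \ {e, f})).Reachable x y ∧ (graphOf (A \ {e, f})).Reachable x v}

/-- `e` and `f` are compatible w.r.t. `F` (`e ~cp f`). -/
def Compatible (A F : Finset (Sym2 V)) (e f : Sym2 V) : Prop :=
  e = f ∨ ¬ leavesSet F (midComp A e f)

/-- `e` is safe: some `F`-edge crosses between the two components of `A ∖ {e}`. -/
def Safe (A F : Finset (Sym2 V)) (e : Sym2 V) : Prop :=
  ∃ g ∈ F, ∃ x y : V, g = s(x, y) ∧ x ≠ y ∧ ¬ (graphOf (A.erase e)).Reachable x y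

/-- `e` is essential: removing it from `A` destroys feasibility. -/
def Essential (A : Finset (Sym2 V)) (T : Finset (V × V)) (e : Sym2 V) : Prop :=
  ¬ Feasible (A.erase e) T

/-- The compatibility class of the edge `e` of `A`. -/
noncomputable def cls (A F : Finset (Sym2 V)) (e : Sym2 V) : Finset (Sym2 V) :=
  A.filter (fun f => Compatible A F e f)

/-- `S_u`: the set of unsafe edges of `A`. -/
noncomputable def unsafeCls (A F : Finset (Sym2 V)) : Finset (Sym2 V) :=
  A.filter (fun e => ¬ Safe A F e)

/-- `𝔖`: the set of compatibility classes of edges of `A`. -/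
noncomputable def classes (A F : Finset (Sym2 V)) : Finset (Finset (Sym2 V)) :=
  A.image (cls A F)

/-- `e` lies on the fundamental cycle closed by adding the edge `f` to the tree `A`. -/
def onFundCycle (A : Finset (Sym2 V)) (f e : Sym2 V) : Prop :=
  e ∈ A ∧ ∀ x y : V, f = s(x, y) →
    (graphOf A).Reachable x y ∧ ¬ (graphOf (A.erase e)).Reachable x y

/-- Edge/edge swap optimality of `A` w.r.t. added edges from `Eadd` and objective `obj`:
no swap that adds an edge `f ∈ Eadd` and removes one edge of the cycle it closes,
keeping feasibility, strictly decreases the objective. -/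
def EdgeEdgeSwapOptimal (Eadd : Finset (Sym2 V)) (T : Finset (V × V))
    (obj : Finset (Sym2 V) → ℝ) (A : Finset (Sym2 V)) : Prop :=
  ∀ f ∈ Eadd, ∀ e, onFundCycle A f e →
    Feasible (A.erase e ∪ {f}) T → obj A ≤ obj (A.erase e ∪ {f})

/-- Edge/set swap optimality of `A` w.r.t. added edges from `Eadd` and objective `obj`:
no swap that adds an edge `f ∈ Eadd` and removes a set `S` of edges of the cycle it closes,
keeping feasibility, strictly decreases the objective. -/
def EdgeSetSwapOptimal (Eadd : Finset (Sym2 V)) (T : Finset (V × V))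
    (obj : Finset (Sym2 V) → ℝ) (A : Finset (Sym2 V)) : Prop :=
  ∀ f ∈ Eadd, ∀ S ⊆ A, (∀ e ∈ S, onFundCycle A f e) →
    Feasible ((A \ S) ∪ {f}) T → obj A ≤ obj ((A \ S) ∪ {f})

/-- Removing swap optimality: deleting any (feasibility preserving) edge set from `A`
does not strictly decrease the objective. -/
def RemovingSwapOptimal (T : Finset (V × V))
    (obj : Finset (Sym2 V) → ℝ) (A : Finset (Sym2 V)) : Prop :=
  ∀ S ⊆ A, Feasible (A \ S) T → obj A ≤ obj (A \ S)

/-- Path/set swap optimality of `A`: for vertices `u, v` in the same component of `A`,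
adding a set `P ⊆ Eadd` of edges (along a `u`–`v` connection) and removing a set `S` of
edges of the component of `u`, in a way that keeps `u,v` connected and the solution
feasible, does not strictly decrease the objective. -/
def PathSetSwapOptimal (Eadd : Finset (Sym2 V)) (T : Finset (V × V))
    (obj : Finset (Sym2 V) → ℝ) (A : Finset (Sym2 V)) : Prop :=
  ∀ u v : V, (graphOf A).Reachable u v →
    ∀ P : Finset (Sym2 V), P ⊆ Eadd → ∀ S ⊆ A,
      (∀ e ∈ S, ∃ x ∈ e, (graphOf A).Reachable u x) →
      (graphOf ((A \ S) ∪ P)).Reachable u v →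
      Feasible ((A \ S) ∪ P) T → obj A ≤ obj ((A \ S) ∪ P)

/-- A connected component `c` of `A ∖ S` is an *inner* component for the class `S`
if it touches (at least) two distinct edges of `S`. -/
def innerComp (A S : Finset (Sym2 V)) (c : (graphOf (A \ S)).ConnectedComponent) : Prop :=
  ∃ e ∈ S, ∃ e' ∈ S, e ≠ e' ∧ (∃ x ∈ e, (graphOf (A \ S)).connectedComponentMk x = c) ∧
    ∃ y ∈ e', (graphOf (A \ S)).connectedComponentMk y = c

/-- The sum of the widths of the inner components `E_{S,i}`, `i ∈ In_S`, of the class `S`. -/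
noncomputable def innerWidthSum (Eall : Finset (Sym2 V)) (d : Sym2 V → ℝ) (T : Finset (V × V))
    (A S : Finset (Sym2 V)) : ℝ :=
  ∑ᶠ c : (graphOf (A \ S)).ConnectedComponent,
    if innerComp A S c then widthSet Eall d T c.supp else 0

/-- `index(E')` for a vertex set `W`: the largest index `i` (in the enumeration `tp` of the
terminal pairs by nondecreasing distance) of a terminal pair lying entirely inside `W`. -/
noncomputable def idxOf {nt : ℕ} (tp : Fin nt → V × V) (W : Set V) : ℕ :=
  sSup {i : ℕ | ∃ h : i < nt, (tp ⟨i, h⟩).1 ∈ W ∧ (tp ⟨i, h⟩).2 ∈ W}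

/-- The finite vertex support of an edge set. -/
def suppF (B : Finset (Sym2 V)) : Finset V :=
  Finset.univ.filter (fun v => ∃ e ∈ B, v ∈ e)

/-- `e` crosses between two different connected components of `A`. -/
def crossingEdge (A : Finset (Sym2 V)) (e : Sym2 V) : Prop :=
  ∀ x y : V, e = s(x, y) → ¬ (graphOf A).Reachable x y

/-- The components of `A` touched by the edge set `B`, i.e. the nodes of `G_A`
incident to `B`. -/
noncomputable def touched (A B : Finset (Sym2 V)) :
    Finset ((graphOf A).ConnectedComponent) :=
  (suppF B).image ((graphOf A).connectedComponentMk)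

/-- `B` is (the edge set of) a tree in the contracted multigraph `G_A`: all its edges cross
between components of `A`, it is connected (through the components of `A` it touches), and
it has one edge less than the number of components it touches. -/
def IsGATree (A B : Finset (Sym2 V)) : Prop :=
  (∀ e ∈ B, crossingEdge A e) ∧ (touched A B).card = B.card + 1 ∧
    ∀ x ∈ suppF B, ∀ y ∈ suppF B, (graphOf (A ∪ B)).Reachable x y

/-- `A` is `c`-approximate connecting move optimal: for every tree `B` in `G_A` (with edges
taken from `Emoves`), the total width of the components it connects, minus the largest of
these widths, is at most `c` times the length of the tree. -/
def ConnApproxOptimal (Emoves Eall : Finset (Sym2 V)) (d : Sym2 V → ℝ) (T : Finset (V × V))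
    (c : ℝ) (A : Finset (Sym2 V)) : Prop :=
  ∀ B ⊆ Emoves, IsGATree A B →
    (∑ t ∈ touched A B, widthSet Eall d T t.supp)
      - (⨆ t ∈ touched A B, widthSet Eall d T t.supp) ≤ c * ∑ e ∈ B, d e

set_option linter.unusedSectionVars false
section Aux
open SimpleGraph

lemma graphOf_le {B C : Finset (Sym2 V)} (h : B ⊆ C) : graphOf B ≤ graphOf C :=
  fun _ _ hadj => ⟨hadj.1, h hadj.2⟩

lemma mem_edgeSet_graphOf {B : Finset (Sym2 V)} {e : Sym2 V} :
    e ∈ (graphOf B).edgeSet ↔ e ∈ B ∧ ¬ e.IsDiag := by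
  induction e using Sym2.ind with
  | _ a b =>
    simp only [mem_edgeSet, Sym2.mk_isDiag_iff]
    constructor
    · rintro ⟨h1, h2⟩; exact ⟨h2, h1⟩
    · rintro ⟨h1, h2⟩; exact ⟨h2, h1⟩

lemma walk_edges_mem {B : Finset (Sym2 V)} {u v : V} (W : (graphOf B).Walk u v) :
    ∀ e ∈ W.edges, e ∈ B := fun _ he => (mem_edgeSet_graphOf.1 (W.edges_subset_edgeSet he)).1

lemma reach_transfer {B C : Finset (Sym2 V)} {u v : V} (W : (graphOf B).Walk u v)
    (h : ∀ e ∈ W.edges, e ∈ C) : (graphOf C).Reachable u v := by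
  refine ⟨W.transfer (graphOf C) (fun e he => ?_)⟩
  exact mem_edgeSet_graphOf.2 ⟨h e he, (mem_edgeSet_graphOf.1 (W.edges_subset_edgeSet he)).2⟩

lemma avoid_edge {B : Finset (Sym2 V)} {x v hp hq : V}
    (hr : (graphOf B).Reachable x v)
    (h1 : ¬ (graphOf B).Reachable x hp) (h2 : ¬ (graphOf B).Reachable x hq) :
    (graphOf (B.erase s(hp, hq))).Reachable x v := by
  obtain ⟨W⟩ := hr
  refine reach_transfer W (fun e he => Finset.mem_erase.2 ⟨?_, walk_edges_mem W e he⟩)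
  rintro rfl
  exact h1 ⟨W.takeUntil hp (W.fst_mem_support_of_mem_edges he)⟩

lemma bridge_not_reach {A : Finset (Sym2 V)} (hac : (graphOf A).IsAcyclic) {a b : V}
    (hab : a ≠ b) (he : s(a, b) ∈ A) :
    ¬ (graphOf (A.erase s(a, b))).Reachable a b := by
  intro hr
  have hbr := (isAcyclic_iff_forall_edge_isBridge.1 hac)
      (mem_edgeSet_graphOf.2 ⟨he, by simp [Sym2.mk_isDiag_iff, hab]⟩)
  rw [isBridge_iff] at hbr
  refine hbr (hr.mono ?_)
  intro u v huv
  rw [deleteEdges_adj]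
  refine ⟨⟨huv.1, (Finset.mem_erase.1 huv.2).2⟩, ?_⟩
  rw [Set.mem_singleton_iff]
  intro h3
  exact (Finset.mem_erase.1 huv.2).1 h3

lemma reach_side_aux {A : Finset (Sym2 V)} {a b v c : V} (W : (graphOf A).Walk v c)
    (hc : c = a ∨ c = b) :
    (graphOf (A.erase s(a, b))).Reachable v a ∨ (graphOf (A.erase s(a, b))).Reachable v b := by
  induction W with
  | nil =>
    rcases hc with rfl | rfl
    · exact Or.inl (SimpleGraph.Reachable.refl _)
    · exact Or.inr (SimpleGraph.Reachable.refl _)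
  | @cons u w _ h q ih =>
    by_cases hvw : s(u, w) = s(a, b)
    · rw [Sym2.eq_iff] at hvw
      rcases hvw with ⟨rfl, rfl⟩ | ⟨rfl, rfl⟩
      · exact Or.inl (SimpleGraph.Reachable.refl _)
      · exact Or.inr (SimpleGraph.Reachable.refl _)
    · have hadj : (graphOf (A.erase s(a, b))).Adj u w :=
        ⟨h.1, Finset.mem_erase.2 ⟨hvw, h.2⟩⟩
      rcases ih hc with h1 | h1
      · exact Or.inl (hadj.reachable.trans h1)
      · exact Or.inr (hadj.reachable.trans h1)

lemma reach_side {A : Finset (Sym2 V)} {a b v : V} (hr : (graphOf A).Reachable v a) :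
    (graphOf (A.erase s(a, b))).Reachable v a ∨ (graphOf (A.erase s(a, b))).Reachable v b := by
  obtain ⟨W⟩ := hr
  exact reach_side_aux W (Or.inl rfl)

lemma sdiff_le_erase_left (A : Finset (Sym2 V)) (e f : Sym2 V) :
    graphOf (A \ {e, f}) ≤ graphOf (A.erase e) := by
  refine graphOf_le (fun t ht => ?_)
  rw [Finset.mem_sdiff] at ht
  refine Finset.mem_erase.2 ⟨fun h => ht.2 (by simp [h]), ht.1⟩

lemma sdiff_le_erase_right (A : Finset (Sym2 V)) (e f : Sym2 V) :
    graphOf (A \ {e, f}) ≤ graphOf (A.erase f) := by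
  refine graphOf_le (fun t ht => ?_)
  rw [Finset.mem_sdiff] at ht
  refine Finset.mem_erase.2 ⟨fun h => ht.2 (by simp [h]), ht.1⟩

lemma double_avoid {A : Finset (Sym2 V)} (hac : (graphOf A).IsAcyclic) {e f : Sym2 V} {u v : V}
    (h1 : (graphOf (A.erase e)).Reachable u v) (h2 : (graphOf (A.erase f)).Reachable u v) :
    (graphOf (A \ {e, f})).Reachable u v := by
  obtain ⟨W1⟩ := h1
  obtain ⟨W2⟩ := h2
  have hup : ∀ (g : Sym2 V) (W : (graphOf (A.erase g)).Walk u v),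
      ∀ t ∈ W.edges, t ∈ (graphOf A).edgeSet := by
    intro g W t ht
    exact mem_edgeSet_graphOf.2 ⟨Finset.erase_subset _ _ (walk_edges_mem W t ht),
      (mem_edgeSet_graphOf.1 (W.edges_subset_edgeSet ht)).2⟩
  let W1' := W1.transfer (graphOf A) (hup e W1)
  let W2' := W2.transfer (graphOf A) (hup f W2)
  have hPeq : W1'.toPath = W2'.toPath := isAcyclic_iff_path_unique.1 hac _ _
  have hsub1 : (W1'.toPath : (graphOf A).Walk u v).edges ⊆ W1.edges := by
    intro t ht
    have := W1'.edges_toPath_subset ht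
    rwa [Walk.edges_transfer] at this
  have hsub2 : (W2'.toPath : (graphOf A).Walk u v).edges ⊆ W2.edges := by
    intro t ht
    have := W2'.edges_toPath_subset ht
    rwa [Walk.edges_transfer] at this
  refine reach_transfer (W1'.toPath : (graphOf A).Walk u v) (fun t ht => ?_)
  rw [Finset.mem_sdiff]
  have ht1 : t ∈ A.erase e := walk_edges_mem W1 t (hsub1 ht)
  have ht2 : t ∈ A.erase f := walk_edges_mem W2 t (hsub2 (hPeq ▸ ht))
  refine ⟨Finset.mem_of_mem_erase ht1, ?_⟩
  simp only [Finset.mem_insert, Finset.mem_singleton]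
  rintro (rfl | rfl)
  · exact (Finset.mem_erase.1 ht1).1 rfl
  · exact (Finset.mem_erase.1 ht2).1 rfl

end Aux

section Aux2

lemma triple_contra {A F : Finset (Sym2 V)}
    (hac : (graphOf A).IsAcyclic)
    (hsupp : supp A = supp F)
    (hconn : ∀ u ∈ supp A, ∀ v ∈ supp A, (graphOf A).Reachable u v)
    {e f g : Sym2 V}
    (hef : e ≠ f) (heg : e ≠ g)
    {m ae be af bf ag bg : V}
    (hee : e = s(ae, be)) (hff : f = s(af, bf)) (hgg : g = s(ag, bg))
    (hagA : ag ∈ supp A)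
    (hGe_ae : (graphOf (A.erase e)).Reachable m ae)
    (hGe_be : ¬ (graphOf (A.erase e)).Reachable m be)
    (hGe_af : (graphOf (A.erase e)).Reachable m af)
    (hGe_bf : (graphOf (A.erase e)).Reachable m bf)
    (hGe_ag : (graphOf (A.erase e)).Reachable m ag)
    (hGf_ae : (graphOf (A.erase f)).Reachable m ae)
    (hGf_af : (graphOf (A.erase f)).Reachable m af)
    (hGg_ae : (graphOf (A.erase g)).Reachable m ae)
    (hGg_be : (graphOf (A.erase g)).Reachable m be)
    (hGg_ag : (graphOf (A.erase g)).Reachable m ag)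
    (hGg_bg : ¬ (graphOf (A.erase g)).Reachable m bg)
    (hdis : ∀ x ∈ supp A, ¬ (graphOf (A.erase g)).Reachable m x →
      (graphOf (A.erase e)).Reachable m x ∧ (graphOf (A.erase f)).Reachable m x)
    (hcomp_ef : Compatible A F e f) (hcomp_eg : Compatible A F e g)
    (hsafe : Safe A F g) : False := by
  subst hee; subst hff; subst hgg
  obtain ⟨g', hg'F, x0, y0, hg'eq, hxy_ne, hnr⟩ := hsafe
  subst hg'eq
  have hx0A : x0 ∈ supp A := by
    rw [hsupp]; exact ⟨s(x0, y0), hg'F, Sym2.mem_iff.2 (Or.inl rfl)⟩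
  have hy0A : y0 ∈ supp A := by
    rw [hsupp]; exact ⟨s(x0, y0), hg'F, Sym2.mem_iff.2 (Or.inr rfl)⟩
  have classify : ∀ z, z ∈ supp A →
      (graphOf (A.erase s(ag, bg))).Reachable m z ∨
      (graphOf (A.erase s(ag, bg))).Reachable z bg := by
    intro z hz
    rcases reach_side (b := bg) (hconn z hz ag hagA) with h | h
    · exact Or.inl (hGg_ag.trans h.symm)
    · exact Or.inr h
  obtain ⟨x, y, hxyF, hxA, hyA, hxfar, hynear⟩ :
      ∃ x y, s(x, y) ∈ F ∧ x ∈ supp A ∧ y ∈ supp A ∧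
        ¬ (graphOf (A.erase s(ag, bg))).Reachable m x ∧
        (graphOf (A.erase s(ag, bg))).Reachable m y := by
    rcases classify x0 hx0A with h1 | h1
    · rcases classify y0 hy0A with h2 | h2
      · exact absurd (h1.symm.trans h2) hnr
      · exact ⟨y0, x0, by rwa [Sym2.eq_swap], hy0A, hx0A,
          fun hy => hGg_bg (hy.trans h2), h1⟩
    · rcases classify y0 hy0A with h2 | h2
      · exact ⟨x0, y0, hg'F, hx0A, hy0A, fun hx => hGg_bg (hx.trans h1), h2⟩
      · exact absurd (h1.trans h2.symm) hnr
  obtain ⟨hdx_e, hdx_f⟩ := hdis x hxA hxfar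
  have hef_ae := double_avoid (e := s(ae, be)) (f := s(af, bf)) hac hGe_ae hGf_ae
  have hef_af := double_avoid (e := s(ae, be)) (f := s(af, bf)) hac hGe_af hGf_af
  have hef_x := double_avoid (e := s(ae, be)) (f := s(af, bf)) hac hdx_e hdx_f
  have hxT : x ∈ midComp A s(ae, be) s(af, bf) :=
    ⟨ae, Sym2.mem_iff.2 (Or.inl rfl), af, Sym2.mem_iff.2 (Or.inl rfl),
      hef_ae.symm.trans hef_af, hef_ae.symm.trans hef_x⟩
  have hyT : y ∈ midComp A s(ae, be) s(af, bf) := by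
    by_contra hyT
    rcases hcomp_ef with h | h
    · exact hef h
    · exact h ⟨s(x, y), hxyF, x, y, rfl, hxT, hyT⟩
  have hTnear : ∀ v ∈ midComp A s(ae, be) s(af, bf),
      (graphOf (A.erase s(ae, be))).Reachable m v := by
    rintro v ⟨z, hz, w, hw, h1, h2⟩
    have hle := sdiff_le_erase_left A s(ae, be) s(af, bf)
    have hwnear : (graphOf (A.erase s(ae, be))).Reachable m w := by
      rcases Sym2.mem_iff.1 hw with rfl | rfl
      · exact hGe_af
      · exact hGe_bf
    rcases Sym2.mem_iff.1 hz with rfl | rfl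
    · exact hGe_ae.trans (h2.mono hle)
    · exact absurd (hwnear.trans (h1.mono hle).symm) hGe_be
  have heg_ae := double_avoid (e := s(ae, be)) (f := s(ag, bg)) hac hGe_ae hGg_ae
  have heg_ag := double_avoid (e := s(ae, be)) (f := s(ag, bg)) hac hGe_ag hGg_ag
  have heg_y := double_avoid (e := s(ae, be)) (f := s(ag, bg)) hac (hTnear y hyT) hynear
  have hyT' : y ∈ midComp A s(ae, be) s(ag, bg) :=
    ⟨ae, Sym2.mem_iff.2 (Or.inl rfl), ag, Sym2.mem_iff.2 (Or.inl rfl),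
      heg_ae.symm.trans heg_ag, heg_ae.symm.trans heg_y⟩
  have hxT' : x ∉ midComp A s(ae, be) s(ag, bg) := by
    rintro ⟨z, hz, w, hw, h1, h2⟩
    have hle := sdiff_le_erase_right A s(ae, be) s(ag, bg)
    have hznear : (graphOf (A.erase s(ag, bg))).Reachable m z := by
      rcases Sym2.mem_iff.1 hz with rfl | rfl
      · exact hGg_ae
      · exact hGg_be
    exact hxfar (hznear.trans (h2.mono hle))
  rcases hcomp_eg with h | h
  · exact heg h
  · exact h ⟨s(x, y), hxyF, y, x, Sym2.eq_swap, hyT', hxT'⟩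

lemma exists_rel_min {α : Type*} (r : α → α → Prop) (s : Finset α) (hne : s.Nonempty)
    (hrefl : ∀ a, r a a) (htrans : ∀ {a b c}, r a b → r b c → r a c)
    (htot : ∀ a ∈ s, ∀ b ∈ s, r a b ∨ r b a) : ∃ m ∈ s, ∀ b ∈ s, r m b := by
  classical
  obtain ⟨m, hm, hmax⟩ := s.exists_max_image (fun b => (s.filter (fun c => r b c)).card) hne
  refine ⟨m, hm, fun b hb => ?_⟩
  by_contra hmb
  have hrb : r b m := (htot m hm b hb).resolve_left hmb
  have hss : s.filter (fun c => r m c) ⊂ s.filter (fun c => r b c) := by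
    constructor
    · intro c hc
      rw [Finset.mem_filter] at hc ⊢
      exact ⟨hc.1, htrans hrb hc.2⟩
    · intro hsub
      have : b ∈ s.filter (fun c => r b c) := Finset.mem_filter.2 ⟨hb, hrefl b⟩
      exact hmb (Finset.mem_filter.1 (hsub this)).2
  exact absurd (hmax b hb) (not_le.2 (Finset.card_lt_card hss))

end Aux2

theorem stmt6_compatible_on_path
    (T : Finset (V × V)) (A F : Finset (Sym2 V))
    (hAfeas : Feasible A T) (hFfeas : Feasible F T)
    (hAtree : IsTreeSol A) (hsupp : supp A = supp F)
    (K : Finset (Sym2 V)) (hKA : K ⊆ A) (hKcard : 2 ≤ K.card)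
    (hKcomp : ∀ e ∈ K, ∀ f ∈ K, Compatible A F e f)
    (hKsafe : ∀ e ∈ K, Safe A F e) :
    ∃ (u v : V) (p : (graphOf A).Walk u v), p.IsPath ∧ ∀ e ∈ K, e ∈ p.edges := by
  classical
  obtain ⟨hnd, hac, hconn⟩ := hAtree
  have hrep : ∀ h, h ∈ A → ∃ a b : V, h = s(a, b) ∧ a ≠ b := by
    intro h
    induction h using Sym2.ind with
    | _ a b =>
      intro hh
      exact ⟨a, b, rfl, fun hab => hnd _ hh (Sym2.mk_isDiag_iff.2 hab)⟩
  have hKne : K.Nonempty := Finset.card_pos.1 (lt_of_lt_of_le (by norm_num) hKcard)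
  obtain ⟨ew, hewK⟩ := hKne
  obtain ⟨aw, bw, hewrep, -⟩ := hrep ew (hKA hewK)
  have hSne : ((K ×ˢ (Finset.univ : Finset V)).filter (fun p => p.2 ∈ p.1)).Nonempty :=
    ⟨(ew, aw), Finset.mem_filter.2 ⟨Finset.mem_product.2 ⟨hewK, Finset.mem_univ _⟩,
      by rw [hewrep]; exact Sym2.mem_iff.2 (Or.inl rfl)⟩⟩
  obtain ⟨mp, hmemS, hmin⟩ := Finset.exists_min_image _
    (fun pr : Sym2 V × V => (K.filter (fun h => h ≠ pr.1 ∧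
      ∀ z ∈ h, (graphOf (A.erase pr.1)).Reachable pr.2 z)).card) hSne
  obtain ⟨e1, q⟩ := mp
  have he1K : e1 ∈ K := (Finset.mem_product.1 (Finset.mem_filter.1 hmemS).1).1
  have hqe1 : q ∈ e1 := (Finset.mem_filter.1 hmemS).2
  have he1A : e1 ∈ A := hKA he1K
  obtain ⟨a1, b1, he1rep, h1ne⟩ := hrep e1 he1A
  obtain ⟨p, he1pq, hpqne⟩ : ∃ p : V, e1 = s(p, q) ∧ p ≠ q := by
    rcases Sym2.mem_iff.1 (by rw [he1rep] at hqe1; exact hqe1) with h | h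
    · exact ⟨b1, by rw [he1rep, h, Sym2.eq_swap], fun hc => h1ne (h ▸ hc.symm)⟩
    · exact ⟨a1, by rw [he1rep, h], fun hc => h1ne (h ▸ hc)⟩
  clear he1rep h1ne hqe1
  subst he1pq
  have hqA : q ∈ supp A := ⟨s(p, q), he1A, Sym2.mem_iff.2 (Or.inr rfl)⟩
  have hpA : p ∈ supp A := ⟨s(p, q), he1A, Sym2.mem_iff.2 (Or.inl rfl)⟩
  -- Extremality: no other edge of K lies inside the q-side of e1.
  have hext : ∀ h ∈ K, h ≠ s(p, q) →
      ¬ (∀ z ∈ h, (graphOf (A.erase s(p, q))).Reachable q z) := by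
    intro f hfK hfne hfin
    obtain ⟨xf, yf, hfrep, hfxyne⟩ := hrep f (hKA hfK)
    subst hfrep
    have hqp_reach : (graphOf (A.erase s(xf, yf))).Reachable q p := by
      refine SimpleGraph.Adj.reachable ⟨Ne.symm hpqne, Finset.mem_erase.2 ⟨?_, ?_⟩⟩
      · intro hc
        apply hfne
        rw [← hc, Sym2.eq_swap]
      · rw [Sym2.eq_swap]; exact he1A
    have hnot_both : ¬ ((graphOf (A.erase s(xf, yf))).Reachable xf p ∧
        (graphOf (A.erase s(xf, yf))).Reachable yf p) := by
      rintro ⟨h1, h2⟩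
      exact bridge_not_reach hac hfxyne (hKA hfK) (h1.trans h2.symm)
    obtain ⟨u, v', hswap, hune_p, hune_q⟩ :
        ∃ u v', s(u, v') = s(xf, yf) ∧ ¬ (graphOf (A.erase s(xf, yf))).Reachable u p ∧
          ¬ (graphOf (A.erase s(xf, yf))).Reachable u q := by
      rcases not_and_or.1 hnot_both with hcase | hcase
      · exact ⟨xf, yf, rfl, hcase, fun hq => hcase (hq.trans hqp_reach.symm.symm)⟩
      · exact ⟨yf, xf, Sym2.eq_swap, hcase, fun hq => hcase (hq.trans hqp_reach.symm.symm)⟩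
    have huf : u ∈ s(xf, yf) := by rw [← hswap]; exact Sym2.mem_iff.2 (Or.inl rfl)
    have hmemS' : (s(xf, yf), u) ∈ (K ×ˢ (Finset.univ : Finset V)).filter (fun p => p.2 ∈ p.1) :=
      Finset.mem_filter.2 ⟨Finset.mem_product.2 ⟨hfK, Finset.mem_univ _⟩, huf⟩
    have hsub : K.filter (fun h => h ≠ s(xf, yf) ∧
          ∀ z ∈ h, (graphOf (A.erase s(xf, yf))).Reachable u z)
        ⊂ K.filter (fun h => h ≠ s(p, q) ∧
          ∀ z ∈ h, (graphOf (A.erase s(p, q))).Reachable q z) := by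
      constructor
      · intro h hh
        rw [Finset.mem_filter] at hh ⊢
        obtain ⟨hhK, hhne, hhin⟩ := hh
        have hne1 : h ≠ s(p, q) := by
          rintro rfl
          exact hune_p (hhin p (Sym2.mem_iff.2 (Or.inl rfl)))
        refine ⟨hhK, hne1, fun z hz => ?_⟩
        have h1 := avoid_edge (hp := p) (hq := q) (hhin z hz) hune_p hune_q
        have h2 : (graphOf (A.erase s(p, q))).Reachable u z :=
          h1.mono (graphOf_le (Finset.erase_subset_erase _ (Finset.erase_subset _ _)))
        exact (hfin u huf).trans h2
      · intro hsubs
        have hfmem : s(xf, yf) ∈ K.filter (fun h => h ≠ s(p, q) ∧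
            ∀ z ∈ h, (graphOf (A.erase s(p, q))).Reachable q z) :=
          Finset.mem_filter.2 ⟨hfK, hfne, hfin⟩
        exact (Finset.mem_filter.1 (hsubs hfmem)).2.1 rfl
    exact absurd (hmin (s(xf, yf), u) hmemS') (not_le.2 (Finset.card_lt_card hsub))
  -- classification of q relative to any edge of K
  have hclass : ∀ h ∈ K, ∀ a b : V, h = s(a, b) →
      (graphOf (A.erase h)).Reachable q a ∨ (graphOf (A.erase h)).Reachable q b := by
    intro h hK a b hr
    subst hr
    exact reach_side (b := b) (hconn q hqA a ⟨s(a, b), hKA hK, Sym2.mem_iff.2 (Or.inl rfl)⟩)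
  -- every other K-edge lies entirely on the p-side of e1
  have hKside : ∀ h ∈ K, h ≠ s(p, q) → ∀ a b : V, h = s(a, b) →
      (¬ (graphOf (A.erase s(p, q))).Reachable q a ∧
        (graphOf (A.erase s(p, q))).Reachable p a) ∧
      (¬ (graphOf (A.erase s(p, q))).Reachable q b ∧
        (graphOf (A.erase s(p, q))).Reachable p b) := by
    intro h hK hne a b hr
    subst hr
    have hab : a ≠ b := fun hc => hnd _ (hKA hK) (Sym2.mk_isDiag_iff.2 hc)
    have hadj : (graphOf (A.erase s(p, q))).Adj a b := ⟨hab, Finset.mem_erase.2 ⟨hne, hKA hK⟩⟩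
    have hiff : (graphOf (A.erase s(p, q))).Reachable q a ↔
        (graphOf (A.erase s(p, q))).Reachable q b :=
      ⟨fun h1 => h1.trans hadj.reachable, fun h1 => h1.trans hadj.symm.reachable⟩
    have hnqa : ¬ (graphOf (A.erase s(p, q))).Reachable q a := by
      intro h1
      apply hext _ hK hne
      intro z hz
      rcases Sym2.mem_iff.1 hz with rfl | rfl
      · exact h1
      · exact hiff.1 h1
    have hnqb : ¬ (graphOf (A.erase s(p, q))).Reachable q b := fun h1 => hnqa (hiff.2 h1)
    have hpa : (graphOf (A.erase s(p, q))).Reachable p a := by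
      rcases reach_side (a := p) (b := q)
          (hconn a ⟨s(a, b), hKA hK, Sym2.mem_iff.2 (Or.inl rfl)⟩ p hpA) with h1 | h1
      · exact h1.symm
      · exact absurd h1.symm hnqa
    exact ⟨⟨hnqa, hpa⟩, ⟨hnqb, hpa.trans hadj.reachable⟩⟩
  -- far side of any K-edge is contained in far side of e1
  have hrel_e1 : ∀ h ∈ K, ∀ v, ¬ (graphOf (A.erase h)).Reachable q v →
      ¬ (graphOf (A.erase s(p, q))).Reachable q v := by
    intro h hK v hv hqv
    by_cases hne : h = s(p, q)
    · rw [hne] at hv; exact hv hqv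
    · obtain ⟨a, b, hr, -⟩ := hrep _ (hKA hK)
      have hside := hKside _ hK hne a b hr
      have h1 := avoid_edge (hp := a) (hq := b) hqv hside.1.1 hside.2.1
      rw [← hr] at h1
      exact hv (h1.mono (graphOf_le (Finset.erase_subset_erase _ (Finset.erase_subset _ _))))
  have hpq_f : ∀ h ∈ K, h ≠ s(p, q) → (graphOf (A.erase h)).Reachable p q :=
    fun h _ hne => SimpleGraph.Adj.reachable
      ⟨hpqne, Finset.mem_erase.2 ⟨Ne.symm hne, he1A⟩⟩
  -- chain (totality of nesting of far sides)
  have htot : ∀ h1 ∈ K, ∀ h2 ∈ K,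
      (∀ v, ¬ (graphOf (A.erase h1)).Reachable q v → ¬ (graphOf (A.erase h2)).Reachable q v) ∨
      (∀ v, ¬ (graphOf (A.erase h2)).Reachable q v → ¬ (graphOf (A.erase h1)).Reachable q v) := by
    intro f1 hf1 f2 hf2
    by_contra hcon
    push_neg at hcon
    obtain ⟨⟨xw, hxw1, hxw2⟩, ⟨yw, hyw1, hyw2⟩⟩ := hcon
    have hne12 : f1 ≠ f2 := by rintro rfl; exact hxw1 hxw2
    have hne1 : f1 ≠ s(p, q) := by
      rintro rfl
      exact hrel_e1 f2 hf2 yw hyw1 hyw2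
    have hne2 : f2 ≠ s(p, q) := by
      rintro rfl
      exact hrel_e1 f1 hf1 xw hxw1 hxw2
    obtain ⟨ae, be, hre, habe, hqae, hqbe⟩ :
        ∃ a b, f1 = s(a, b) ∧ a ≠ b ∧ (graphOf (A.erase f1)).Reachable q a ∧
          ¬ (graphOf (A.erase f1)).Reachable q b := by
      obtain ⟨a1', b1', hr1, hne1'⟩ := hrep _ (hKA hf1)
      have hbr : ¬ (graphOf (A.erase f1)).Reachable a1' b1' := by
        rw [hr1]; exact bridge_not_reach hac hne1' (by rw [← hr1]; exact hKA hf1)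
      rcases hclass _ hf1 a1' b1' hr1 with h1 | h1
      · exact ⟨a1', b1', hr1, hne1', h1, fun h2 => hbr (h1.symm.trans h2)⟩
      · exact ⟨b1', a1', by rw [hr1, Sym2.eq_swap], fun hc => hne1' hc.symm, h1,
          fun h2 => hbr (h2.symm.trans h1)⟩
    obtain ⟨af, bf, hrf, habf, hqaf, hqbf⟩ :
        ∃ a b, f2 = s(a, b) ∧ a ≠ b ∧ (graphOf (A.erase f2)).Reachable q a ∧
          ¬ (graphOf (A.erase f2)).Reachable q b := by
      obtain ⟨a2', b2', hr2, hne2'⟩ := hrep _ (hKA hf2)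
      have hbr : ¬ (graphOf (A.erase f2)).Reachable a2' b2' := by
        rw [hr2]; exact bridge_not_reach hac hne2' (by rw [← hr2]; exact hKA hf2)
      rcases hclass _ hf2 a2' b2' hr2 with h1 | h1
      · exact ⟨a2', b2', hr2, hne2', h1, fun h2 => hbr (h1.symm.trans h2)⟩
      · exact ⟨b2', a2', by rw [hr2, Sym2.eq_swap], fun hc => hne2' hc.symm, h1,
          fun h2 => hbr (h2.symm.trans h1)⟩
    -- f2 lies on the near side of f1
    have hf2near : ∀ z ∈ f2, (graphOf (A.erase f1)).Reachable q z := by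
      by_contra hcon2
      push_neg at hcon2
      obtain ⟨z, hz, hzf⟩ := hcon2
      have hadj2 : (graphOf (A.erase f1)).Adj af bf := by
        refine ⟨habf, Finset.mem_erase.2 ⟨?_, by rw [← hrf]; exact hKA hf2⟩⟩
        rw [← hrf]; exact hne12.symm
      have haf : ¬ (graphOf (A.erase f1)).Reachable q af := by
        intro h1
        apply hzf
        rw [hrf] at hz
        rcases Sym2.mem_iff.1 hz with rfl | rfl
        · exact h1
        · exact h1.trans hadj2.reachable
      have hbf2 : ¬ (graphOf (A.erase f1)).Reachable q bf :=
        fun h1 => haf (h1.trans hadj2.symm.reachable)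
      have h1 := avoid_edge (hp := af) (hq := bf) hyw2 haf hbf2
      rw [← hrf] at h1
      exact hyw1 (h1.mono (graphOf_le (Finset.erase_subset_erase _ (Finset.erase_subset _ _))))
    -- f1 lies on the near side of f2
    have hf1near : ∀ z ∈ f1, (graphOf (A.erase f2)).Reachable q z := by
      by_contra hcon2
      push_neg at hcon2
      obtain ⟨z, hz, hzf⟩ := hcon2
      have hadj2 : (graphOf (A.erase f2)).Adj ae be := by
        refine ⟨habe, Finset.mem_erase.2 ⟨?_, by rw [← hre]; exact hKA hf1⟩⟩
        rw [← hre]; exact hne12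
      have hae : ¬ (graphOf (A.erase f2)).Reachable q ae := by
        intro h1
        apply hzf
        rw [hre] at hz
        rcases Sym2.mem_iff.1 hz with rfl | rfl
        · exact h1
        · exact h1.trans hadj2.reachable
      have hbe2 : ¬ (graphOf (A.erase f2)).Reachable q be :=
        fun h1 => hae (h1.trans hadj2.symm.reachable)
      have h1 := avoid_edge (hp := ae) (hq := be) hxw2 hae hbe2
      rw [← hre] at h1
      exact hxw1 (h1.mono (graphOf_le (Finset.erase_subset_erase _ (Finset.erase_subset _ _))))
    have hprf1 := hpq_f f1 hf1 hne1
    have hprf2 := hpq_f f2 hf2 hne2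
    have hsidee := hKside f1 hf1 hne1 ae be hre
    have hsidef := hKside f2 hf2 hne2 af bf hrf
    refine triple_contra hac hsupp hconn hne12 hne1 hre hrf rfl hpA
      (hprf1.trans hqae)
      (fun h1 => hqbe (hprf1.symm.trans h1))
      (hprf1.trans (hf2near af (by rw [hrf]; exact Sym2.mem_iff.2 (Or.inl rfl))))
      (hprf1.trans (hf2near bf (by rw [hrf]; exact Sym2.mem_iff.2 (Or.inr rfl))))
      (SimpleGraph.Reachable.refl _)
      (hprf2.trans (hf1near ae (by rw [hre]; exact Sym2.mem_iff.2 (Or.inl rfl))))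
      (hprf2.trans hqaf)
      hsidee.1.2
      hsidee.2.2
      (SimpleGraph.Reachable.refl _)
      (bridge_not_reach hac hpqne he1A)
      ?_ (hKcomp f1 hf1 f2 hf2) (hKcomp f1 hf1 s(p, q) he1K) (hKsafe s(p, q) he1K)
    intro x hx hxfar
    have hxq : (graphOf (A.erase s(p, q))).Reachable q x := by
      rcases reach_side (a := p) (b := q) (hconn x hx p hpA) with h1 | h1
      · exact absurd h1.symm hxfar
      · exact h1.symm
    constructor
    · have h1 := avoid_edge (hp := ae) (hq := be) hxq hsidee.1.1 hsidee.2.1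
      rw [← hre] at h1
      exact hprf1.trans
        (h1.mono (graphOf_le (Finset.erase_subset_erase _ (Finset.erase_subset _ _))))
    · have h1 := avoid_edge (hp := af) (hq := bf) hxq hsidef.1.1 hsidef.2.1
      rw [← hrf] at h1
      exact hprf2.trans
        (h1.mono (graphOf_le (Finset.erase_subset_erase _ (Finset.erase_subset _ _))))
  -- pick the minimal element of the chain
  have hKne2 : K.Nonempty := ⟨_, he1K⟩
  obtain ⟨emin, heminK, hminrel⟩ := exists_rel_min
    (fun h1 h2 => ∀ v, ¬ (graphOf (A.erase h1)).Reachable q v →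
      ¬ (graphOf (A.erase h2)).Reachable q v)
    K hKne2 (fun _ _ hv => hv) (fun hab hbc v hv => hbc v (hab v hv)) htot
  obtain ⟨am, bm, hmrep, hmne⟩ := hrep emin (hKA heminK)
  obtain ⟨w, hwA, hwfar⟩ : ∃ w, w ∈ supp A ∧ ¬ (graphOf (A.erase emin)).Reachable q w := by
    have hbr : ¬ (graphOf (A.erase emin)).Reachable am bm := by
      rw [hmrep]; exact bridge_not_reach hac hmne (by rw [← hmrep]; exact hKA heminK)
    rcases hclass emin heminK am bm hmrep with h1 | h1
    · exact ⟨bm, ⟨emin, hKA heminK, by rw [hmrep]; exact Sym2.mem_iff.2 (Or.inr rfl)⟩,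
        fun h2 => hbr (h1.symm.trans h2)⟩
    · exact ⟨am, ⟨emin, hKA heminK, by rw [hmrep]; exact Sym2.mem_iff.2 (Or.inl rfl)⟩,
        fun h2 => hbr (h2.symm.trans h1)⟩
  have hallfar : ∀ h ∈ K, ¬ (graphOf (A.erase h)).Reachable q w :=
    fun h hK => hminrel h hK w hwfar
  obtain ⟨W⟩ := hconn q hqA w hwA
  refine ⟨q, w, (W.toPath : (graphOf A).Walk q w), W.toPath.2, fun h hK => ?_⟩
  by_contra hnot
  apply hallfar h hK
  exact reach_transfer (W.toPath : (graphOf A).Walk q w)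
    (fun t ht => Finset.mem_erase.2 ⟨fun hth => hnot (hth ▸ ht), walk_edges_mem _ t ht⟩)
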